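/- Let (H_X, H_Z) be a CSS code and q ≥ 2, and let H'_X and H'_Z be the check matrices of the copied code. Then H'_X · (H'_Z)ᵀ = 0, and the number of logical qubits is preserved: dim_{F₂}( ker(H'_X) / rowspan(H'_Z) ) = dim_{F₂}( ker(H_X) / rowspan(H_Z) ). -/

import Mathlib

open Matrix

/-- The `F₂`-span of the rows of a matrix. -/
noncomputable def rowSpan {ι κ : Type*} [Fintype ι] [Fintype κ] (M : Matrix ι κ (ZMod 2)) :
    Submodule (ZMod 2) (κ → ZMod 2) :=
  Submodule.span (ZMod 2) (Set.range fun i => M i)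

/-- The kernel `{v : M v = 0}` of a matrix, as a submodule. -/
noncomputable def kerMat {ι κ : Type*} [Fintype ι] [Fintype κ] (M : Matrix ι κ (ZMod 2)) :
    Submodule (ZMod 2) (κ → ZMod 2) :=
  LinearMap.ker M.mulVecLin

/-- Number of logical qubits of a CSS code: `dim (ker H_X / rowspan H_Z)`
(the quotient of the kernel by the intersection of the row span with the kernel,
which agrees with `ker/rowspan` when `rowspan ⊆ ker`). -/
noncomputable def logicalDim {ι₁ ι₂ κ : Type*} [Fintype ι₁] [Fintype ι₂] [Fintype κ]
    (HX : Matrix ι₁ κ (ZMod 2)) (HZ : Matrix ι₂ κ (ZMod 2)) : ℕ :=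
  Module.finrank (ZMod 2) (↥(kerMat HX) ⧸ (rowSpan HZ).comap (kerMat HX).subtype)

/-- Parity check matrix of the `[q,1,q]` repetition code: row `j` is `e_j + e_{j+1}`. -/
def repCheck (q : ℕ) : Matrix (Fin (q - 1)) (Fin q) (ZMod 2) :=
  Matrix.of fun j c => if c.val = j.val ∨ c.val = j.val + 1 then 1 else 0

/-- `I_n ⊗ H_R` acting on `F₂^n ⊗ F₂^q`. -/
def idKronRep (n q : ℕ) : Matrix (Fin n × Fin (q - 1)) (Fin n × Fin q) (ZMod 2) :=
  Matrix.of fun b p => if p.1 = b.1 then repCheck q b.2 p.2 else 0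

/-- `H_X ⊗ ê₁ᵀ` where `ê₁ = (1,0,…,0) ∈ F₂^q`. -/
def kronE1 {nX n : ℕ} (q : ℕ) (HX : Matrix (Fin nX) (Fin n) (ZMod 2)) :
    Matrix (Fin nX) (Fin n × Fin q) (ZMod 2) :=
  Matrix.of fun a p => if p.2.val = 0 then HX a p.1 else 0

/-- X check matrix of the copied code: `H_X ⊗ ê₁ᵀ` stacked on top of `I_n ⊗ H_R`. -/
def copyX {nX n : ℕ} (q : ℕ) (HX : Matrix (Fin nX) (Fin n) (ZMod 2)) :
    Matrix (Fin nX ⊕ (Fin n × Fin (q - 1))) (Fin n × Fin q) (ZMod 2) :=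
  Matrix.of fun s p =>
    match s with
    | Sum.inl a => kronE1 q HX a p
    | Sum.inr b => idKronRep n q b p

/-- Z check matrix of the copied code: `H_Z ⊗ 1_qᵀ`. -/
def copyZ {nZ n : ℕ} (q : ℕ) (HZ : Matrix (Fin nZ) (Fin n) (ZMod 2)) :
    Matrix (Fin nZ) (Fin n × Fin q) (ZMod 2) :=
  Matrix.of fun s p => HZ s p.1

lemma rep_dot {q : ℕ} (j : Fin (q - 1)) (f : Fin q → ZMod 2) :
    ∑ c, repCheck q j c * f c
      = f ⟨j.val, by have := j.isLt; omega⟩ + f ⟨j.val + 1, by have := j.isLt; omega⟩ := by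
  have hj := j.isLt
  set c₁ : Fin q := ⟨j.val, by omega⟩
  set c₂ : Fin q := ⟨j.val + 1, by omega⟩
  have key : ∀ c : Fin q, repCheck q j c * f c
      = (if c = c₁ then f c else 0) + (if c = c₂ then f c else 0) := by
    intro c
    simp only [repCheck, Matrix.of_apply, Fin.ext_iff, c₁, c₂]
    split_ifs with h1 h2 h3 h4 h5 <;> simp_all
  rw [Finset.sum_congr rfl fun c _ => key c, Finset.sum_add_distrib,
    Finset.sum_ite_eq' Finset.univ c₁ f, Finset.sum_ite_eq' Finset.univ c₂ f]
  simp

lemma copyX_mulVec_inr {nX n q : ℕ} (HX : Matrix (Fin nX) (Fin n) (ZMod 2))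
    (w : Fin n × Fin q → ZMod 2) (i : Fin n) (j : Fin (q - 1)) :
    (copyX q HX).mulVec w (Sum.inr (i, j))
      = w (i, ⟨j.val, by have := j.isLt; omega⟩) + w (i, ⟨j.val + 1, by have := j.isLt; omega⟩) := by
  have : (copyX q HX).mulVec w (Sum.inr (i, j))
      = ∑ p : Fin n × Fin q, (if p.1 = i then repCheck q j p.2 else 0) * w p := by
    simp [Matrix.mulVec, dotProduct, copyX, idKronRep]
  rw [this, Fintype.sum_prod_type]
  have h2 : ∀ i' : Fin n, (∑ c : Fin q, (if i' = i then repCheck q j c else 0) * w (i', c))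
      = if i' = i then ∑ c : Fin q, repCheck q j c * w (i, c) else 0 := by
    intro i'
    split_ifs with h
    · subst h; rfl
    · simp [h]
  rw [Finset.sum_congr rfl fun i' _ => h2 i', Finset.sum_ite_eq' Finset.univ i]
  simp [rep_dot j (fun c => w (i, c))]

lemma copyX_mulVec_inl {nX n q : ℕ} (hq : 0 < q) (HX : Matrix (Fin nX) (Fin n) (ZMod 2))
    (w : Fin n × Fin q → ZMod 2) (a : Fin nX) :
    (copyX q HX).mulVec w (Sum.inl a)
      = HX.mulVec (fun i => w (i, ⟨0, hq⟩)) a := by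
  have : (copyX q HX).mulVec w (Sum.inl a)
      = ∑ p : Fin n × Fin q, (if p.2 = (⟨0, hq⟩ : Fin q) then HX a p.1 else 0) * w p := by
    simp only [Matrix.mulVec, dotProduct, copyX, kronE1, Matrix.of_apply]
    congr 1; ext p; congr 1
    simp [Fin.ext_iff]
  rw [this, Fintype.sum_prod_type]
  simp only [Matrix.mulVec, dotProduct]
  congr 1; ext i
  rw [show (∑ c : Fin q, (if c = (⟨0, hq⟩ : Fin q) then HX a i else 0) * w (i, c))
      = ∑ c : Fin q, (if c = (⟨0, hq⟩ : Fin q) then HX a i * w (i, c) else 0) from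
    Finset.sum_congr rfl (by intro c _; split_ifs <;> simp)]
  rw [Finset.sum_ite_eq' Finset.univ]
  simp

lemma mem_kerMat_copyX {nX n q : ℕ} (hq : 0 < q) (HX : Matrix (Fin nX) (Fin n) (ZMod 2))
    (w : Fin n × Fin q → ZMod 2) (hw : (copyX q HX).mulVec w = 0) :
    (∀ i c, w (i, c) = w (i, ⟨0, hq⟩)) ∧ HX.mulVec (fun i => w (i, ⟨0, hq⟩)) = 0 := by
  constructor
  · intro i c
    obtain ⟨m, hm⟩ := c
    induction m with
    | zero => rfl
    | succ m ih =>
      have hm' : m < q - 1 := by omega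
      have h0 := congrFun hw (Sum.inr (i, ⟨m, hm'⟩))
      rw [copyX_mulVec_inr] at h0
      have hab : w (i, ⟨m, by omega⟩) + w (i, ⟨m + 1, hm⟩) = 0 := by simpa using h0
      have : w (i, ⟨m + 1, hm⟩) = w (i, ⟨m, by omega⟩) := by
        have h3 := eq_neg_of_add_eq_zero_right hab
        rwa [CharTwo.neg_eq] at h3
      rw [this, ih (by omega)]
  · ext a
    have h0 := congrFun hw (Sum.inl a)
    rw [copyX_mulVec_inl hq] at h0
    simpa using h0

lemma psi_mem_ker {nX n q : ℕ} (hq : 0 < q) (HX : Matrix (Fin nX) (Fin n) (ZMod 2))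
    (v : Fin n → ZMod 2) (hv : HX.mulVec v = 0) :
    (copyX q HX).mulVec (fun p => v p.1) = 0 := by
  ext s
  cases s with
  | inl a =>
    rw [copyX_mulVec_inl hq]
    exact congrFun hv a
  | inr b =>
    obtain ⟨i, j⟩ := b
    rw [copyX_mulVec_inr]
    simp [CharTwo.add_self_eq_zero]


/-- **Copying is a CSS code and preserves the number of logical qubits.** -/
theorem copying_preserves_logical_qubits {nX nZ n q : ℕ} (hq : 2 ≤ q)
    (HX : Matrix (Fin nX) (Fin n) (ZMod 2)) (HZ : Matrix (Fin nZ) (Fin n) (ZMod 2))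
    (hcss : HX * HZ.transpose = 0) :
    copyX q HX * (copyZ q HZ).transpose = 0 ∧
      logicalDim (copyX q HX) (copyZ q HZ) = logicalDim HX HZ := by
  have hq0 : 0 < q := by omega
  set π : ((Fin n × Fin q) → ZMod 2) →ₗ[ZMod 2] (Fin n → ZMod 2) :=
    LinearMap.funLeft (ZMod 2) (ZMod 2) (fun i : Fin n => (i, (⟨0, hq0⟩ : Fin q))) with hπ
  set ψ : (Fin n → ZMod 2) →ₗ[ZMod 2] ((Fin n × Fin q) → ZMod 2) :=
    LinearMap.funLeft (ZMod 2) (ZMod 2) (Prod.fst : Fin n × Fin q → Fin n) with hψdef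
  -- CSS condition for the copied code
  have hentry : ∀ s z, (copyX q HX * (copyZ q HZ).transpose) s z
      = (copyX q HX).mulVec (fun p => copyZ q HZ z p) s := by
    intro s z
    simp [Matrix.mul_apply, Matrix.mulVec, dotProduct]
  have part1 : copyX q HX * (copyZ q HZ).transpose = 0 := by
    ext s z
    rw [hentry]
    cases s with
    | inl a =>
      rw [copyX_mulVec_inl hq0]
      have : (fun i => copyZ q HZ z (i, (⟨0, hq0⟩ : Fin q))) = HZ z := rfl
      rw [this]
      have : HX.mulVec (HZ z) a = (HX * HZ.transpose) a z := by
        simp [Matrix.mul_apply, Matrix.mulVec, dotProduct]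
      rw [this, hcss]
      simp
    | inr b =>
      obtain ⟨i, j⟩ := b
      rw [copyX_mulVec_inr]
      show HZ z i + HZ z i = (0 : Matrix _ _ (ZMod 2)) _ z
      simp [CharTwo.add_self_eq_zero]
  refine ⟨part1, ?_⟩
  -- row span relation
  have hrow : rowSpan (copyZ q HZ) = Submodule.map ψ (rowSpan HZ) := by
    rw [rowSpan, rowSpan, Submodule.map_span]
    congr 1
    rw [← Set.range_comp]
    rfl
  -- the maps restrict
  have hπmem : ∀ w ∈ kerMat (copyX q HX), π w ∈ kerMat HX := by
    intro w hw
    have := (mem_kerMat_copyX hq0 HX w hw).2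
    simp only [kerMat, LinearMap.mem_ker, Matrix.mulVecLin_apply]
    exact this
  have hψmem : ∀ v ∈ kerMat HX, ψ v ∈ kerMat (copyX q HX) := by
    intro v hv
    have := psi_mem_ker hq0 HX v (by simpa [kerMat, Matrix.mulVecLin_apply] using hv)
    simp only [kerMat, LinearMap.mem_ker, Matrix.mulVecLin_apply]
    exact this
  set f : kerMat (copyX q HX) →ₗ[ZMod 2] kerMat HX := π.restrict hπmem with hf
  set g : kerMat HX →ₗ[ZMod 2] kerMat (copyX q HX) := ψ.restrict hψmem with hg
  have hfg : f.comp g = LinearMap.id := by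
    apply LinearMap.ext; intro x; apply Subtype.ext; rfl
  have hgf : g.comp f = LinearMap.id := by
    apply LinearMap.ext; intro x
    apply Subtype.ext
    have hconst := (mem_kerMat_copyX hq0 HX x.1 x.2).1
    funext p
    exact (hconst p.1 p.2).symm
  set e : (kerMat (copyX q HX)) ≃ₗ[ZMod 2] (kerMat HX) :=
    LinearEquiv.ofLinear f g hfg hgf with he
  have happ : ∀ x : kerMat (copyX q HX), ((e x : Fin n → ZMod 2)) = π x.1 := fun x => rfl
  have hmap : ((rowSpan (copyZ q HZ)).comap (kerMat (copyX q HX)).subtype).map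
      (e : kerMat (copyX q HX) →ₗ[ZMod 2] kerMat HX)
      = (rowSpan HZ).comap (kerMat HX).subtype := by
    apply le_antisymm
    · rintro y ⟨x, hx, rfl⟩
      simp only [Submodule.mem_comap, Submodule.coe_subtype, Submodule.subtype_apply] at hx ⊢
      rw [hrow] at hx
      obtain ⟨u, hu, hux⟩ := hx
      have hux' : ψ u = (x : Fin n × Fin q → ZMod 2) := hux
      have : ((e x : Fin n → ZMod 2)) = u := by
        rw [happ, ← hux']
        rfl
      rw [LinearEquiv.coe_coe, this]
      exact hu
    · intro y hy
      simp only [Submodule.mem_comap, Submodule.coe_subtype, Submodule.subtype_apply] at hy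
      refine ⟨g y, ?_, ?_⟩
      · simp only [SetLike.mem_coe, Submodule.mem_comap, hrow]
        exact ⟨y.1, hy, rfl⟩
      · have := congrFun (congrArg DFunLike.coe hfg) y
        exact this
  have equiv := Submodule.Quotient.equiv
    ((rowSpan (copyZ q HZ)).comap (kerMat (copyX q HX)).subtype)
    ((rowSpan HZ).comap (kerMat HX).subtype) e hmap
  exact LinearEquiv.finrank_eq equiv
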